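/- (Example 4.9, cohomology, ring presentation) The ring P_H(x) of integral piecewise polynomials on Σ_{(1,1,2)} is generated as a ring by the global linear functions X_1 = (x_1,x_1,x_1) and X_2 = (x_2,x_2,x_2) together with p = (0, 2x_1, x_2) and q = (0, x_1(2x_1 − x_2), 0); precisely, the ℤ-algebra homomorphism from the polynomial ring ℤ[X_1,X_2,P,Q] to P_H(x) sending X_1 ↦ (x_1,x_1,x_1), X_2 ↦ (x_2,x_2,x_2), P ↦ p, Q ↦ q is surjective with kernel the ideal I_1 = ( P(P − X_2) − 2Q, Q(P − 2X_1), Q(Q − X_1(2X_1 − X_2)) ), so P_H(x) ≅ ℤ[X_1,X_2,P,Q]/I_1. -/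

import Mathlib

open MvPolynomial

noncomputable section

/-- The ring of integral piecewise polynomials on the fan `Σ_{(1,1,2)}` of `ℙ(1,1,2)`,
as a subring of `ℤ[x₁,x₂]³`: triples `(f₀, f₁, f₂)` (component `fᵢ` attached to the
maximal cone `σᵢ`) with `x₁ ∣ f₀ − f₁`, `x₂ ∣ f₀ − f₂` and `(2x₁ − x₂) ∣ f₁ − f₂`.
Here `x₁ = X 0` and `x₂ = X 1` in `MvPolynomial (Fin 2) ℤ`. -/
def PH112 : Subring (Fin 3 → MvPolynomial (Fin 2) ℤ) where
  carrier := {f | X 0 ∣ f 0 - f 1 ∧ X 1 ∣ f 0 - f 2 ∧ (2 * X 0 - X 1) ∣ f 1 - f 2}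
  zero_mem' := by refine ⟨?_, ?_, ?_⟩ <;> simp
  one_mem' := by refine ⟨?_, ?_, ?_⟩ <;> simp
  add_mem' := by
    rintro a b ⟨ha1, ha2, ha3⟩ ⟨hb1, hb2, hb3⟩
    refine ⟨?_, ?_, ?_⟩
    · have := dvd_add ha1 hb1
      simpa [add_sub_add_comm] using this
    · have := dvd_add ha2 hb2
      simpa [add_sub_add_comm] using this
    · have := dvd_add ha3 hb3
      simpa [add_sub_add_comm] using this
  neg_mem' := by
    rintro a ⟨h1, h2, h3⟩
    exact ⟨by simpa [neg_sub_neg, ← sub_eq_neg_add] using h1.neg_right,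
      by simpa [neg_sub_neg, ← sub_eq_neg_add] using h2.neg_right,
      by simpa [neg_sub_neg, ← sub_eq_neg_add] using h3.neg_right⟩
  mul_mem' := by
    rintro a b ⟨ha1, ha2, ha3⟩ ⟨hb1, hb2, hb3⟩
    have key : ∀ (i j : Fin 3) (d : MvPolynomial (Fin 2) ℤ),
        d ∣ a i - a j → d ∣ b i - b j → d ∣ a i * b i - a j * b j := by
      intro i j d h1 h2
      have e : a i * b i - a j * b j = (a i - a j) * b i + a j * (b i - b j) := by ring
      rw [e]
      exact dvd_add (h1.mul_right _) (h2.mul_left _)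
    exact ⟨key 0 1 _ ha1 hb1, key 0 2 _ ha2 hb2, key 1 2 _ ha3 hb3⟩

/-- The piecewise polynomial `p = (0, 2x₁, x₂)`. -/
def pElt : Fin 3 → MvPolynomial (Fin 2) ℤ := ![0, 2 * X 0, X 1]

/-- The piecewise polynomial `q = (0, x₁(2x₁ − x₂), 0)`. -/
def qElt : Fin 3 → MvPolynomial (Fin 2) ℤ := ![0, X 0 * (2 * X 0 - X 1), 0]


namespace PH112Aux

abbrev R2 := MvPolynomial (Fin 2) ℤ
abbrev R4 := MvPolynomial (Fin 4) ℤ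

/-- inclusion of variables -/
def em : Fin 2 → Fin 4 := Fin.castLE (by norm_num)

/-- the involution x₂ ↦ 2x₁ - x₂ -/
def τ : R2 →ₐ[ℤ] R2 := aeval ![X 0, 2 * X 0 - X 1]

lemma τ_X0 : τ (X 0) = X 0 := by simp [τ]
lemma τ_X1 : τ (X 1) = 2 * X 0 - X 1 := by simp [τ]

lemma ττ (g : R2) : τ (τ g) = g := by
  have h : ∀ i : Fin 2, τ (τ (X i)) = X i := by
    intro i
    fin_cases i
    · show τ (τ (X 0)) = X 0
      rw [τ_X0, τ_X0]
    · show τ (τ (X 1)) = X 1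
      rw [τ_X1, map_sub, map_mul, τ_X0, τ_X1, map_ofNat]
      ring
  have hcomp : τ.comp τ = AlgHom.id ℤ R2 := MvPolynomial.algHom_ext fun i => by
    simpa using h i
  calc τ (τ g) = (τ.comp τ) g := rfl
    _ = g := by rw [hcomp]; rfl

lemma prime_X1 : Prime (X 1 : R2) := by
  have h0 : Prime (X 0 : R2) := by
    rw [← MulEquiv.prime_iff (MvPolynomial.finSuccEquiv ℤ 1).toMulEquiv]
    have : (MvPolynomial.finSuccEquiv ℤ 1).toMulEquiv (X 0) = Polynomial.X := by
      simpa using MvPolynomial.finSuccEquiv_X_zero (R := ℤ) (n := 1)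
    rw [this]
    exact Polynomial.prime_X
  have h1 := (MulEquiv.prime_iff (MvPolynomial.renameEquiv ℤ (Equiv.swap (0 : Fin 2) 1)).toMulEquiv).mpr h0
  simpa [MvPolynomial.renameEquiv_apply, MvPolynomial.rename_X,
    Equiv.swap_apply_left] using h1

lemma not_X1_dvd_X0 : ¬ (X 1 : R2) ∣ X 0 := by
  rw [MvPolynomial.X_dvd_X]
  decide

/-- key coprimality-style lemma -/
lemma mul_dvd_of_dvd (g : R2) (h1 : (X 0 : R2) ∣ g) (h2 : (2 * X 0 - X 1 : R2) ∣ g) :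
    (X 0 * (2 * X 0 - X 1) : R2) ∣ g := by
  obtain ⟨h, rfl⟩ := h1
  have h2' : (τ (2 * X 0 - X 1) : R2) ∣ τ (X 0 * h) := map_dvd τ h2
  have e1 : τ (2 * X 0 - X 1) = (X 1 : R2) := by
    simp only [map_sub, map_mul, map_ofNat, τ_X0, τ_X1]; ring
  rw [e1, map_mul, τ_X0] at h2'
  rcases prime_X1.2.2 _ _ h2' with hc | hc
  · exact absurd hc not_X1_dvd_X0
  · have := map_dvd τ hc
    rw [ττ, τ_X1] at this
    exact mul_dvd_mul_left _ this

lemma two_X0_sub_X1_ne_zero : (2 * X 0 - X 1 : R2) ≠ 0 := by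
  intro h
  have := congrArg (MvPolynomial.eval ![(1 : ℤ), 0]) h
  simp at this

/-- the tuple of generators -/
def wFun : Fin 4 → (Fin 3 → R2) := ![fun _ => X 0, fun _ => X 1, pElt, qElt]

lemma wFun_mem (j : Fin 4) : wFun j ∈ PH112 := by
  fin_cases j
  · exact ⟨by simp [wFun], by simp [wFun], by simp [wFun]⟩
  · exact ⟨by simp [wFun], by simp [wFun], by simp [wFun]⟩
  · refine ⟨⟨-2, ?_⟩, ⟨-1, ?_⟩, ⟨1, ?_⟩⟩ <;> simp [wFun, pElt] <;> ring
  · refine ⟨⟨-(2 * X 0 - X 1), ?_⟩, ⟨0, ?_⟩, ⟨X 0, ?_⟩⟩ <;> simp [wFun, qElt] <;> ring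

def vElt (j : Fin 4) : PH112 := ⟨wFun j, wFun_mem j⟩

/-- the evaluation algebra hom into PH112 -/
def Φ : R4 →ₐ[ℤ] PH112 := aeval vElt

/-- the subring inclusion as an AlgHom -/
def inc : PH112 →ₐ[ℤ] (Fin 3 → R2) :=
  { PH112.subtype with commutes' := fun n => rfl }

lemma comp_apply (F : R4) (i : Fin 3) :
    ((Φ F : PH112) : Fin 3 → R2) i = aeval (fun j => wFun j i) F := by
  have h := MvPolynomial.comp_aeval vElt ((Pi.evalAlgHom ℤ (fun _ => R2) i).comp inc)
  have := congrFun (congrArg (fun (g : R4 →ₐ[ℤ] R2) => (g : R4 → R2)) h) F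
  exact this

lemma diag_eval (i : Fin 3) (g : R2) :
    aeval (fun j => wFun j i) (rename em g) = g := by
  rw [MvPolynomial.aeval_rename]
  have : ((fun j => wFun j i) ∘ em) = X := by
    funext k
    fin_cases k <;> fin_cases i <;> rfl
  rw [this, MvPolynomial.aeval_X_left_apply]

lemma ren_X0 : rename em (X 0 : R2) = (X 0 : R4) := by
  rw [MvPolynomial.rename_X]; rfl

lemma ren_X1 : rename em (X 1 : R2) = (X 1 : R4) := by
  rw [MvPolynomial.rename_X]; rfl

/-- generating set of the ideal of relations -/
def Igen : Set R4 :=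
  {X 2 * (X 2 - X 1) - 2 * X 3, X 3 * (X 2 - 2 * X 0), X 3 * (X 3 - X 0 * (2 * X 0 - X 1))}

lemma reduce (F : R4) : ∃ c a b : R2,
    F - (rename em c + rename em a * X 2 + rename em b * X 3) ∈ Ideal.span Igen := by
  induction F using MvPolynomial.induction_on with
  | C n => exact ⟨C n, 0, 0, by simp [MvPolynomial.rename_C]⟩
  | add p q hp hq =>
    obtain ⟨c1, a1, b1, h1⟩ := hp
    obtain ⟨c2, a2, b2, h2⟩ := hq
    refine ⟨c1 + c2, a1 + a2, b1 + b2, ?_⟩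
    have e : p + q - (rename em (c1+c2) + rename em (a1+a2) * X 2 + rename em (b1+b2) * X 3)
        = (p - (rename em c1 + rename em a1 * X 2 + rename em b1 * X 3))
        + (q - (rename em c2 + rename em a2 * X 2 + rename em b2 * X 3)) := by
      simp only [map_add]; ring
    rw [e]; exact Ideal.add_mem _ h1 h2
  | mul_X p n hp =>
    obtain ⟨c, a, b, h⟩ := hp
    have hr1 : (X 2 * (X 2 - X 1) - 2 * X 3 : R4) ∈ Ideal.span Igen :=
      Ideal.subset_span (by simp [Igen])
    have hr2 : (X 3 * (X 2 - 2 * X 0) : R4) ∈ Ideal.span Igen :=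
      Ideal.subset_span (by simp [Igen])
    have hr3 : (X 3 * (X 3 - X 0 * (2 * X 0 - X 1)) : R4) ∈ Ideal.span Igen :=
      Ideal.subset_span (by simp [Igen])
    fin_cases n
    · show ∃ c' a' b' : R2, p * X 0 -
        (rename em c' + rename em a' * X 2 + rename em b' * X 3) ∈ Ideal.span Igen
      refine ⟨c * X 0, a * X 0, b * X 0, ?_⟩
      have e : p * X 0 - (rename em (c * X 0) + rename em (a * X 0) * X 2
            + rename em (b * X 0) * X 3)
          = (p - (rename em c + rename em a * X 2 + rename em b * X 3)) * X 0 := by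
        simp only [map_mul, ren_X0]; ring
      rw [e]; exact Ideal.mul_mem_right _ _ h
    · show ∃ c' a' b' : R2, p * X 1 -
        (rename em c' + rename em a' * X 2 + rename em b' * X 3) ∈ Ideal.span Igen
      refine ⟨c * X 1, a * X 1, b * X 1, ?_⟩
      have e : p * X 1 - (rename em (c * X 1) + rename em (a * X 1) * X 2
            + rename em (b * X 1) * X 3)
          = (p - (rename em c + rename em a * X 2 + rename em b * X 3)) * X 1 := by
        simp only [map_mul, ren_X1]; ring
      rw [e]; exact Ideal.mul_mem_right _ _ h
    · show ∃ c' a' b' : R2, p * X 2 -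
        (rename em c' + rename em a' * X 2 + rename em b' * X 3) ∈ Ideal.span Igen
      refine ⟨0, c + a * X 1, 2 * a + 2 * X 0 * b, ?_⟩
      have e : p * X 2 - (rename em 0 + rename em (c + a * X 1) * X 2
            + rename em (2 * a + 2 * X 0 * b) * X 3)
          = (p - (rename em c + rename em a * X 2 + rename em b * X 3)) * X 2
            + rename em a * (X 2 * (X 2 - X 1) - 2 * X 3)
            + rename em b * (X 3 * (X 2 - 2 * X 0)) := by
        simp only [map_mul, map_add, map_zero, map_ofNat, ren_X0, ren_X1]; ring
      rw [e]
      exact Ideal.add_mem _ (Ideal.add_mem _ (Ideal.mul_mem_right _ _ h)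
        (Ideal.mul_mem_left _ _ hr1)) (Ideal.mul_mem_left _ _ hr2)
    · show ∃ c' a' b' : R2, p * X 3 -
        (rename em c' + rename em a' * X 2 + rename em b' * X 3) ∈ Ideal.span Igen
      refine ⟨0, 0, c + 2 * X 0 * a + (X 0 * (2 * X 0 - X 1)) * b, ?_⟩
      have e : p * X 3 - (rename em 0 + rename em 0 * X 2
            + rename em (c + 2 * X 0 * a + (X 0 * (2 * X 0 - X 1)) * b) * X 3)
          = (p - (rename em c + rename em a * X 2 + rename em b * X 3)) * X 3
            + rename em a * (X 3 * (X 2 - 2 * X 0))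
            + rename em b * (X 3 * (X 3 - X 0 * (2 * X 0 - X 1))) := by
        simp only [map_mul, map_add, map_sub, map_zero, map_ofNat, ren_X0, ren_X1]; ring
      rw [e]
      exact Ideal.add_mem _ (Ideal.add_mem _ (Ideal.mul_mem_right _ _ h)
        (Ideal.mul_mem_left _ _ hr2)) (Ideal.mul_mem_left _ _ hr3)

lemma w0v (i : Fin 3) : wFun 0 i = X 0 := rfl
lemma w1v (i : Fin 3) : wFun 1 i = X 1 := rfl
lemma w20 : wFun 2 0 = 0 := rfl
lemma w21 : wFun 2 1 = 2 * X 0 := rfl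
lemma w22 : wFun 2 2 = X 1 := rfl
lemma w30 : wFun 3 0 = 0 := rfl
lemma w31 : wFun 3 1 = X 0 * (2 * X 0 - X 1) := rfl
lemma w32 : wFun 3 2 = 0 := rfl

end PH112Aux

/-- **Example 4.9, cohomology, ring presentation.**
`P_H(x)` for `Σ_{(1,1,2)}` is generated as a ring by the global linear functions
`X₁ = (x₁,x₁,x₁)`, `X₂ = (x₂,x₂,x₂)` together with `p` and `q`: the ring homomorphism
from `ℤ[X₁,X₂,P,Q]` (realised as `MvPolynomial (Fin 4) ℤ` with `X 0 ↦ X₁`, `X 1 ↦ X₂`,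
`X 2 ↦ P`, `X 3 ↦ Q`) to `P_H(x)` sending `X₁, X₂` to the diagonal elements and
`P ↦ p`, `Q ↦ q` is surjective with kernel the ideal
`I₁ = (P(P−X₂) − 2Q, Q(P−2X₁), Q(Q − X₁(2X₁−X₂)))`, so `P_H(x) ≅ ℤ[X₁,X₂,P,Q]/I₁`. -/
theorem PH112_presentation :
    ∃ φ : MvPolynomial (Fin 4) ℤ →+* PH112,
      ((φ (X 0) : Fin 3 → MvPolynomial (Fin 2) ℤ) = fun _ => X 0) ∧
      ((φ (X 1) : Fin 3 → MvPolynomial (Fin 2) ℤ) = fun _ => X 1) ∧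
      ((φ (X 2) : Fin 3 → MvPolynomial (Fin 2) ℤ) = pElt) ∧
      ((φ (X 3) : Fin 3 → MvPolynomial (Fin 2) ℤ) = qElt) ∧
      Function.Surjective φ ∧
      RingHom.ker φ = Ideal.span
        {X 2 * (X 2 - X 1) - 2 * X 3,
         X 3 * (X 2 - 2 * X 0),
         X 3 * (X 3 - X 0 * (2 * X 0 - X 1))} := by
  classical
  open PH112Aux in
  refine ⟨Φ.toRingHom, ?_, ?_, ?_, ?_, ?_, ?_⟩
  · show ((aeval vElt (X 0) : PH112) : Fin 3 → R2) = _
    rw [aeval_X]; rfl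
  · show ((aeval vElt (X 1) : PH112) : Fin 3 → R2) = _
    rw [aeval_X]; rfl
  · show ((aeval vElt (X 2) : PH112) : Fin 3 → R2) = _
    rw [aeval_X]; rfl
  · show ((aeval vElt (X 3) : PH112) : Fin 3 → R2) = _
    rw [aeval_X]; rfl
  · -- surjectivity
    rintro ⟨f, hf1, hf2, hf3⟩
    obtain ⟨a, ha⟩ : (X 1 : R2) ∣ f 2 - f 0 := dvd_sub_comm.mp hf2
    have hg1 : (X 0 : R2) ∣ f 1 - f 0 - 2 * X 0 * a :=
      dvd_sub (dvd_sub_comm.mp hf1) ⟨2 * a, by ring⟩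
    have hg2 : (2 * X 0 - X 1 : R2) ∣ f 1 - f 0 - 2 * X 0 * a := by
      have e : f 1 - f 0 - 2 * X 0 * a = (f 1 - f 2) - (2 * X 0 - X 1) * a := by
        linear_combination ha
      rw [e]
      exact dvd_sub hf3 (Dvd.intro _ rfl)
    obtain ⟨b, hb⟩ := mul_dvd_of_dvd _ hg1 hg2
    refine ⟨rename em (f 0) + rename em a * X 2 + rename em b * X 3, ?_⟩
    apply Subtype.ext
    funext i
    show ((Φ _ : PH112) : Fin 3 → R2) i = f i
    rw [comp_apply, map_add, map_add, map_mul, map_mul, aeval_X, aeval_X,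
      diag_eval, diag_eval, diag_eval]
    fin_cases i
    · show f 0 + a * wFun 2 0 + b * wFun 3 0 = f 0
      rw [w20, w30]; ring
    · show f 0 + a * wFun 2 1 + b * wFun 3 1 = f 1
      rw [w21, w31]
      linear_combination -hb
    · show f 0 + a * wFun 2 2 + b * wFun 3 2 = f 2
      rw [w22, w32]
      linear_combination -ha
  · -- kernel
    have hspan : Ideal.span Igen ≤ RingHom.ker Φ.toRingHom := by
      rw [Ideal.span_le]
      intro r hr
      have hcomp : ∀ r : R4, (∀ i, aeval (fun j => wFun j i) r = 0) →
          r ∈ RingHom.ker Φ.toRingHom := by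
        intro r h
        rw [RingHom.mem_ker]
        show Φ r = 0
        apply Subtype.ext
        funext i
        rw [show ((Φ r : PH112) : Fin 3 → R2) i = _ from comp_apply r i, h i]
        rfl
      have evgen : ∀ (i : Fin 3) (r : R4),
          aeval (fun j => wFun j i) r
            = aeval (fun j => wFun j i) r := fun _ _ => rfl
      rcases hr with rfl | hr
      · apply hcomp
        intro i
        fin_cases i
        · show aeval (fun j => wFun j 0) (X 2 * (X 2 - X 1) - 2 * X 3 : R4) = 0
          simp only [map_sub, map_mul, map_ofNat, aeval_X, w0v, w1v, w20, w30]
          ring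
        · show aeval (fun j => wFun j 1) (X 2 * (X 2 - X 1) - 2 * X 3 : R4) = 0
          simp only [map_sub, map_mul, map_ofNat, aeval_X, w0v, w1v, w21, w31]
          ring
        · show aeval (fun j => wFun j 2) (X 2 * (X 2 - X 1) - 2 * X 3 : R4) = 0
          simp only [map_sub, map_mul, map_ofNat, aeval_X, w0v, w1v, w22, w32]
          ring
      · rcases hr with rfl | hr
        · apply hcomp
          intro i
          fin_cases i
          · show aeval (fun j => wFun j 0) (X 3 * (X 2 - 2 * X 0) : R4) = 0
            simp only [map_sub, map_mul, map_ofNat, aeval_X, w0v, w1v, w20, w30]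
            ring
          · show aeval (fun j => wFun j 1) (X 3 * (X 2 - 2 * X 0) : R4) = 0
            simp only [map_sub, map_mul, map_ofNat, aeval_X, w0v, w1v, w21, w31]
            ring
          · show aeval (fun j => wFun j 2) (X 3 * (X 2 - 2 * X 0) : R4) = 0
            simp only [map_sub, map_mul, map_ofNat, aeval_X, w0v, w1v, w22, w32]
            ring
        · rcases hr with rfl
          apply hcomp
          intro i
          fin_cases i
          · show aeval (fun j => wFun j 0)
              (X 3 * (X 3 - X 0 * (2 * X 0 - X 1)) : R4) = 0
            simp only [map_sub, map_mul, map_ofNat, aeval_X, w0v, w1v, w20, w30]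
            ring
          · show aeval (fun j => wFun j 1)
              (X 3 * (X 3 - X 0 * (2 * X 0 - X 1)) : R4) = 0
            simp only [map_sub, map_mul, map_ofNat, aeval_X, w0v, w1v, w21, w31]
            ring
          · show aeval (fun j => wFun j 2)
              (X 3 * (X 3 - X 0 * (2 * X 0 - X 1)) : R4) = 0
            simp only [map_sub, map_mul, map_ofNat, aeval_X, w0v, w1v, w22, w32]
            ring
    show RingHom.ker Φ.toRingHom = Ideal.span Igen
    refine le_antisymm ?_ hspan
    intro F hF
    rw [RingHom.mem_ker] at hF
    obtain ⟨c, a, b, hI⟩ := reduce F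
    have hN0 : (rename em c + rename em a * X 2 + rename em b * X 3 : R4) =
        rename em c + rename em a * X 2 + rename em b * X 3 := rfl
    have hFN : Φ.toRingHom
        (F - (rename em c + rename em a * X 2 + rename em b * X 3)) = 0 := hspan hI
    have hN : Φ (rename em c + rename em a * X 2 + rename em b * X 3) = 0 := by
      have h2 : Φ.toRingHom F - Φ.toRingHom
          (rename em c + rename em a * X 2 + rename em b * X 3) = 0 := by
        rw [← RingHom.map_sub]; exact hFN
      rw [hF, zero_sub, neg_eq_zero] at h2
      exact h2
    have key : ∀ i, aeval (fun j => wFun j i)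
        (rename em c + rename em a * X 2 + rename em b * X 3 : R4) = 0 := by
      intro i
      rw [← comp_apply, hN]
      rfl
    have keyexp : ∀ i, c + a * wFun 2 i + b * wFun 3 i = 0 := by
      intro i
      have := key i
      rwa [map_add, map_add, map_mul, map_mul, aeval_X, aeval_X,
        diag_eval, diag_eval, diag_eval] at this
    have hc : c = 0 := by
      have h0 := keyexp 0
      rw [w20, w30] at h0
      simpa using h0
    have ha : a = 0 := by
      have := keyexp 2
      rw [hc, w22, w32, mul_zero, add_zero, zero_add] at this
      rcases mul_eq_zero.mp this with h | h
      · exact h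
      · exact absurd h (MvPolynomial.X_ne_zero 1)
    have hb : b = 0 := by
      have := keyexp 1
      rw [hc, ha, w21, w31, zero_mul, add_zero, zero_add] at this
      rcases mul_eq_zero.mp this with h | h
      · exact h
      · exact absurd h (mul_ne_zero (MvPolynomial.X_ne_zero 0) two_X0_sub_X1_ne_zero)
    rw [hc, ha, hb] at hI
    simpa using hI
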